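/- For the degree-2 curve with weights (1, 1/2, 1/1) i.e. ω = (1, 1/2, 1) and p_i = i, the maximum of r'(t) on [0,1] equals 8/3 and is attained at t = 1/2. -/

import Mathlib

/-- Bernstein polynomial `B_i^n(t) = C(n,i) t^i (1-t)^(n-i)`. -/
def bern (n i : ℕ) (t : ℝ) : ℝ := (n.choose i : ℝ) * t ^ i * (1 - t) ^ (n - i)

/-- Weights of the degree-2 example. -/
noncomputable def w2 : Fin 3 → ℝ := ![1, 1/2, 1]

lemma den_pos (t : ℝ) : (0:ℝ) < 1 - t + t^2 := by nlinarith [sq_nonneg (t - 1/2)]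

lemma hasDeriv (t : ℝ) :
    HasDerivAt (fun t : ℝ => (t + t^2) / (1 - t + t^2))
      ((1 + 2*t - 2*t^2) / (1 - t + t^2)^2) t := by
  have h1 : HasDerivAt (fun t : ℝ => t + t^2) (1 + 2*t) t := by
    simpa using (hasDerivAt_id' t).fun_add (hasDerivAt_pow 2 t)
  have h2 : HasDerivAt (fun t : ℝ => 1 - t + t^2) (-1 + 2*t) t := by
    have := ((hasDerivAt_const t (1:ℝ)).fun_sub (hasDerivAt_id' t)).fun_add (hasDerivAt_pow 2 t)
    simpa using this
  have hne : (1 - t + t^2) ≠ 0 := (den_pos t).ne'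
  have := h1.fun_div h2 hne
  refine this.congr_deriv ?_
  rw [div_left_inj' (pow_ne_zero 2 hne)]
  ring

theorem stmt_19
    (r : ℝ → ℝ)
    (hr : r = fun t => (∑ i : Fin 3, w2 i * (i : ℝ) * bern 2 i t) /
      (∑ i : Fin 3, w2 i * bern 2 i t)) :
    deriv r (1/2) = 8/3 ∧ ∀ t ∈ Set.Icc (0 : ℝ) 1, deriv r t ≤ 8/3 := by
  have hr' : r = fun t : ℝ => (t + t^2) / (1 - t + t^2) := by
    rw [hr]; funext t
    simp only [Fin.sum_univ_three, w2, bern]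
    norm_num [Matrix.cons_val_two, Matrix.tail_cons, Matrix.head_cons]
    ring_nf
  have hderiv : ∀ t : ℝ, deriv r t = (1 + 2*t - 2*t^2) / (1 - t + t^2)^2 := by
    intro t; rw [hr']; exact (hasDeriv t).deriv
  constructor
  · rw [hderiv]; norm_num
  · intro t _
    rw [hderiv]
    rw [div_le_iff₀ (pow_pos (den_pos t) 2)]
    nlinarith [sq_nonneg (t - 1/2), den_pos t, sq_nonneg t, mul_nonneg (sq_nonneg (t - 1/2)) (den_pos t).le]
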